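/- arXiv:2603.24156 — 5 statements merged into one kernel-verified Lean document; each statement's English description precedes it below -/
import Mathlib

section
/- Let E = ℝ^d with the Euclidean inner product, let g : E → ℝ be differentiable with L-Lipschitz gradient ∇g (L > 0), let f : E → ℝ, let F : E × E → ℝ be a tangent majorant of f, let 0 < τ ≤ 1/L, and set h = f + g and H(x, x̃) = F(x, x̃) + g(x̃) + ⟨x − x̃, ∇g(x̃)⟩ + (1/(2τ))‖x − x̃‖². Let (x^(n)) be a sequence in E such that for every n, x^(n+1) is a global minimizer of z ↦ H(z, x^(n)). Then the sequence (h(x^(n))) is non-increasing; moreover, if h is bounded from below, then (h(x^(n))) converges to a real limit. -/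
open scoped RealInnerProductSpace

lemma descent_lemma {d : ℕ} (g : EuclideanSpace ℝ (Fin d) → ℝ) (L : ℝ)
    (hg : Differentiable ℝ g)
    (hlip : ∀ a b : EuclideanSpace ℝ (Fin d),
      ‖gradient g a - gradient g b‖ ≤ L * ‖a - b‖)
    (a b : EuclideanSpace ℝ (Fin d)) :
    g b ≤ g a + ⟪b - a, gradient g a⟫ + L / 2 * ‖b - a‖ ^ 2 := by
  set v := b - a with hv
  set ψ : ℝ → ℝ := fun t => g (a + t • v) - t * ⟪v, gradient g a⟫ - L / 2 * t ^ 2 * ‖v‖ ^ 2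
    with hψ
  have hderiv : ∀ t : ℝ, HasDerivAt ψ
      (⟪gradient g (a + t • v), v⟫ - ⟪v, gradient g a⟫ - L * t * ‖v‖ ^ 2) t := by
    intro t
    have hline : HasDerivAt (fun t : ℝ => a + t • v) v t := by
      simpa using ((hasDerivAt_id t).smul_const v).const_add a
    have h1 : HasDerivAt (fun t : ℝ => g (a + t • v)) ⟪gradient g (a + t • v), v⟫ t := by
      have hgrad := (hg (a + t • v)).hasGradientAt
      have := (hasGradientAt_iff_hasFDerivAt.mp hgrad).comp_hasDerivAt t hline
      rw [Function.comp_def] at this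
      simpa [gradient] using this
    have h2 : HasDerivAt (fun t : ℝ => t * ⟪v, gradient g a⟫) ⟪v, gradient g a⟫ t := by
      simpa using (hasDerivAt_id t).mul_const (⟪v, gradient g a⟫)
    have h3 : HasDerivAt (fun t : ℝ => L / 2 * t ^ 2 * ‖v‖ ^ 2) (L * t * ‖v‖ ^ 2) t := by
      have : HasDerivAt (fun t : ℝ => t ^ 2) (2 * t) t := by
        simpa using hasDerivAt_pow 2 t
      have := ((this.const_mul (L / 2)).mul_const (‖v‖ ^ 2))
      rw [show L * t * ‖v‖ ^ 2 = L / 2 * (2 * t) * ‖v‖ ^ 2 by ring]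
      exact this
    exact (h1.sub h2).sub h3
  have hψ10 : ψ 1 ≤ ψ 0 := by
    have hanti : AntitoneOn ψ (Set.Icc 0 1) := by
      apply antitoneOn_of_deriv_nonpos (convex_Icc 0 1)
      · exact Continuous.continuousOn (continuous_iff_continuousAt.mpr
          fun t => (hderiv t).differentiableAt.continuousAt)
      · intro t ht
        exact (hderiv t).differentiableAt.differentiableWithinAt
      · intro t ht
        rw [(hderiv t).deriv]
        have ht' : 0 < t ∧ t < 1 := by
          simpa [Set.mem_Ioo] using (by simpa using ht : t ∈ Set.Ioo (0:ℝ) 1)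
        have key : ⟪gradient g (a + t • v), v⟫ - ⟪v, gradient g a⟫ ≤ L * t * ‖v‖ ^ 2 := by
          have h1 : ⟪gradient g (a + t • v), v⟫ - ⟪v, gradient g a⟫
              = ⟪gradient g (a + t • v) - gradient g a, v⟫ := by
            rw [real_inner_comm (gradient g a) v, ← inner_sub_left]
          rw [h1]
          calc ⟪gradient g (a + t • v) - gradient g a, v⟫
              ≤ ‖gradient g (a + t • v) - gradient g a‖ * ‖v‖ :=
                real_inner_le_norm _ _
            _ ≤ (L * ‖a + t • v - a‖) * ‖v‖ := by
                apply mul_le_mul_of_nonneg_right (hlip _ _) (norm_nonneg _)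
            _ = L * t * ‖v‖ ^ 2 := by
                rw [show a + t • v - a = t • v by abel, norm_smul,
                  Real.norm_eq_abs, abs_of_pos ht'.1]
                ring
        linarith
    exact hanti (by norm_num) (by norm_num) (by norm_num)
  have e1 : ψ 1 = g b - ⟪v, gradient g a⟫ - L / 2 * ‖v‖ ^ 2 := by
    simp [hψ, hv]
  have e0 : ψ 0 = g a := by simp [hψ]
  rw [e1, e0] at hψ10
  linarith

/-- Majorized forward-backward iterations: the objective values `h (x n)` form a
non-increasing sequence, and converge to a real limit whenever `h = f + g` is
bounded from below. -/
theorem majorized_fb_monotone_and_convergent {d : ℕ}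
    (g f : EuclideanSpace ℝ (Fin d) → ℝ)
    (F : EuclideanSpace ℝ (Fin d) × EuclideanSpace ℝ (Fin d) → ℝ)
    (L τ : ℝ) (hL : 0 < L)
    (hg : Differentiable ℝ g)
    (hlip : ∀ a b : EuclideanSpace ℝ (Fin d),
      ‖gradient g a - gradient g b‖ ≤ L * ‖a - b‖)
    (hmaj : ∀ x xt : EuclideanSpace ℝ (Fin d), f x ≤ F (x, xt))
    (hdiag : ∀ x : EuclideanSpace ℝ (Fin d), F (x, x) = f x)
    (hτ0 : 0 < τ) (hτ : τ ≤ 1 / L)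
    (x : ℕ → EuclideanSpace ℝ (Fin d))
    (hiter : ∀ n : ℕ, ∀ z : EuclideanSpace ℝ (Fin d),
      F (x (n + 1), x n) + g (x n) + ⟪x (n + 1) - x n, gradient g (x n)⟫ +
          (1 / (2 * τ)) * ‖x (n + 1) - x n‖ ^ 2
        ≤ F (z, x n) + g (x n) + ⟪z - x n, gradient g (x n)⟫ +
          (1 / (2 * τ)) * ‖z - x n‖ ^ 2) :
    (Antitone fun n : ℕ => f (x n) + g (x n)) ∧
    ((∃ m : ℝ, ∀ z : EuclideanSpace ℝ (Fin d), m ≤ f z + g z) →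
      ∃ l : ℝ, Filter.Tendsto (fun n : ℕ => f (x n) + g (x n)) Filter.atTop (nhds l)) := by
  have hLτ : L ≤ 1 / τ := by
    rw [le_div_iff₀ hτ0]
    calc L * τ ≤ L * (1 / L) := by
          apply mul_le_mul_of_nonneg_left hτ hL.le
      _ = 1 := by field_simp
  have key : ∀ n : ℕ, f (x (n + 1)) + g (x (n + 1)) ≤ f (x n) + g (x n) := by
    intro n
    have h1 := hiter n (x n)
    rw [hdiag] at h1
    simp only [sub_self, inner_zero_left, norm_zero, add_zero, zero_pow, mul_zero,
      OfNat.ofNat_ne_zero, ne_eq, not_false_eq_true] at h1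
    have h2 : g (x (n + 1)) ≤ g (x n) + ⟪x (n + 1) - x n, gradient g (x n)⟫ +
        L / 2 * ‖x (n + 1) - x n‖ ^ 2 := descent_lemma g L hg hlip (x n) (x (n + 1))
    have h3 : L / 2 * ‖x (n + 1) - x n‖ ^ 2 ≤ (1 / (2 * τ)) * ‖x (n + 1) - x n‖ ^ 2 := by
      apply mul_le_mul_of_nonneg_right _ (sq_nonneg _)
      rw [div_le_div_iff₀ (by norm_num) (by positivity)]
      have hLτ' : L * τ ≤ 1 := (le_div_iff₀ hτ0).mp hLτ
      nlinarith
    have h4 := hmaj (x (n + 1)) (x n)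
    linarith
  have hanti : Antitone fun n : ℕ => f (x n) + g (x n) := antitone_nat_of_succ_le key
  refine ⟨hanti, fun ⟨m, hm⟩ => ?_⟩
  refine ⟨⨅ n, f (x n) + g (x n), tendsto_atTop_ciInf hanti ⟨m, ?_⟩⟩
  rintro y ⟨n, rfl⟩
  exact hm (x n)
end

section
/- Let E = ℝ^d with the Euclidean inner product, let g : E → ℝ be differentiable with L-Lipschitz gradient ∇g (L > 0), let f : E → ℝ, let F : E × E → ℝ be a tangent majorant of f, let 0 < τ < 1/L, set h = f + g, and assume h(x) ≥ h* for all x ∈ E for some h* ∈ ℝ. Let (x^(n)) be a sequence in E such that for every n, x^(n+1) is a global minimizer of z ↦ F(z, x^(n)) + g(x^(n)) + ⟨z − x^(n), ∇g(x^(n))⟩ + (1/(2τ))‖z − x^(n)‖². Then for every N ≥ 1, the partial sum satisfies Σ_{n=0}^{N−1} ‖x^(n+1) − x^(n)‖² ≤ (h(x^(0)) − h*) / (1/(2τ) − L/2). -/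
open scoped RealInnerProductSpace

lemma my_descent {d : ℕ} (g : EuclideanSpace ℝ (Fin d) → ℝ) (L : ℝ) (hL : 0 ≤ L)
    (hg : Differentiable ℝ g)
    (hlip : ∀ a b : EuclideanSpace ℝ (Fin d),
      ‖gradient g a - gradient g b‖ ≤ L * ‖a - b‖)
    (x y : EuclideanSpace ℝ (Fin d)) :
    g y ≤ g x + ⟪y - x, gradient g x⟫ + L / 2 * ‖y - x‖ ^ 2 := by
  set v := y - x with hv
  set φ' : ℝ → ℝ := fun t => ⟪v, gradient g (x + t • v)⟫ with hφ'
  have hderiv : ∀ t : ℝ, HasDerivAt (fun t : ℝ => g (x + t • v)) (φ' t) t := by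
    intro t
    have h1 : HasDerivAt (fun t : ℝ => x + t • v) v t := by
      simpa using ((hasDerivAt_id t).smul_const v).const_add x
    have h2 : HasFDerivAt g (InnerProductSpace.toDual ℝ _ (gradient g (x + t • v))) (x + t • v) :=
      hasGradientAt_iff_hasFDerivAt.mp (hg _).hasGradientAt
    have h3 := h2.comp_hasDerivAt t h1
    have : φ' t = (InnerProductSpace.toDual ℝ _ (gradient g (x + t • v))) v := by
      rw [hφ', InnerProductSpace.toDual_apply_apply, real_inner_comm]
    rw [this]
    exact h3
  have hlipw : LipschitzWith (Real.toNNReal L) (gradient g) :=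
    LipschitzWith.of_dist_le_mul fun a b => by
      rw [dist_eq_norm, dist_eq_norm, Real.coe_toNNReal L hL]; exact hlip a b
  have hcont : Continuous (gradient g) := hlipw.continuous
  have hcφ' : Continuous φ' := by
    exact Continuous.inner continuous_const
      (hcont.comp (continuous_const.add (continuous_id.smul continuous_const)))
  have hftc : ∫ t in (0:ℝ)..1, φ' t = g (x + (1:ℝ) • v) - g (x + (0:ℝ) • v) :=
    intervalIntegral.integral_eq_sub_of_hasDerivAt (fun t _ => hderiv t)
      (hcφ'.intervalIntegrable 0 1)
  have hbound : ∀ t ∈ Set.Icc (0:ℝ) 1, φ' t ≤ φ' 0 + L * ‖v‖ ^ 2 * t := by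
    intro t ht
    have h1 : φ' t - φ' 0 ≤ ‖v‖ * ‖gradient g (x + t • v) - gradient g (x + (0:ℝ) • v)‖ := by
      have heq : φ' t - φ' 0 = ⟪v, gradient g (x + t • v) - gradient g (x + (0:ℝ) • v)⟫ := by
        rw [hφ', inner_sub_right]
      rw [heq]; exact real_inner_le_norm _ _
    have h2 : ‖gradient g (x + t • v) - gradient g (x + (0:ℝ) • v)‖ ≤ L * (t * ‖v‖) := by
      have h := hlip (x + t • v) (x + (0:ℝ) • v)
      have heq : (x + t • v) - (x + (0:ℝ) • v) = t • v := by
        rw [zero_smul, add_zero]; abel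
      rw [heq, norm_smul, Real.norm_eq_abs, abs_of_nonneg ht.1] at h
      exact h
    nlinarith [norm_nonneg v, mul_le_mul_of_nonneg_left h2 (norm_nonneg v)]
  have hint : ∫ t in (0:ℝ)..1, φ' t ≤ ∫ t in (0:ℝ)..1, (φ' 0 + L * ‖v‖ ^ 2 * t) := by
    apply intervalIntegral.integral_mono_on (by norm_num) (hcφ'.intervalIntegrable 0 1)
      ?_ hbound
    exact ((continuous_const.add (continuous_const.mul continuous_id)).intervalIntegrable 0 1)
  have hval : ∫ t in (0:ℝ)..1, (φ' 0 + L * ‖v‖ ^ 2 * t) = φ' 0 + L / 2 * ‖v‖ ^ 2 := by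
    have hInt : IntervalIntegrable (fun t : ℝ => L * ‖v‖ ^ 2 * t) MeasureTheory.volume 0 1 :=
      (continuous_const.mul continuous_id).intervalIntegrable 0 1
    rw [intervalIntegral.integral_add intervalIntegrable_const hInt]
    have h5 : ∫ t in (0:ℝ)..1, L * ‖v‖ ^ 2 * t = L * ‖v‖ ^ 2 * ∫ t in (0:ℝ)..1, t :=
      intervalIntegral.integral_const_mul _ _
    rw [h5, integral_id]
    simp
    ring
  have hy : x + (1:ℝ) • v = y := by rw [one_smul, hv]; abel
  have hx0 : x + (0:ℝ) • v = x := by rw [zero_smul, add_zero]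
  have hφ0 : φ' 0 = ⟪v, gradient g x⟫ := by
    show ⟪v, gradient g (x + (0:ℝ) • v)⟫ = _
    rw [hx0]
  rw [hy, hx0] at hftc
  rw [hval, hφ0] at hint
  have : g y - g x ≤ ⟪v, gradient g x⟫ + L / 2 * ‖v‖ ^ 2 := hftc ▸ hint
  linarith

/-- Summed sufficient decrease: the partial sums of squared successive differences
of the majorized forward-backward iterates are bounded by
`(h (x 0) - h*) / (1/(2τ) - L/2)`. -/
theorem majorized_fb_sum_sq_bound {d : ℕ}
    (g f : EuclideanSpace ℝ (Fin d) → ℝ)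
    (F : EuclideanSpace ℝ (Fin d) × EuclideanSpace ℝ (Fin d) → ℝ)
    (L τ : ℝ) (hL : 0 < L)
    (hg : Differentiable ℝ g)
    (hlip : ∀ a b : EuclideanSpace ℝ (Fin d),
      ‖gradient g a - gradient g b‖ ≤ L * ‖a - b‖)
    (hmaj : ∀ x xt : EuclideanSpace ℝ (Fin d), f x ≤ F (x, xt))
    (hdiag : ∀ x : EuclideanSpace ℝ (Fin d), F (x, x) = f x)
    (hτ0 : 0 < τ) (hτ : τ < 1 / L)
    (hstar : ℝ) (hbound : ∀ z : EuclideanSpace ℝ (Fin d), hstar ≤ f z + g z)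
    (x : ℕ → EuclideanSpace ℝ (Fin d))
    (hiter : ∀ n : ℕ, ∀ z : EuclideanSpace ℝ (Fin d),
      F (x (n + 1), x n) + g (x n) + ⟪x (n + 1) - x n, gradient g (x n)⟫ +
          (1 / (2 * τ)) * ‖x (n + 1) - x n‖ ^ 2
        ≤ F (z, x n) + g (x n) + ⟪z - x n, gradient g (x n)⟫ +
          (1 / (2 * τ)) * ‖z - x n‖ ^ 2) :
    ∀ N : ℕ, 1 ≤ N →
      ∑ n ∈ Finset.range N, ‖x (n + 1) - x n‖ ^ 2
        ≤ (f (x 0) + g (x 0) - hstar) / (1 / (2 * τ) - L / 2) := by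
  set c : ℝ := 1 / (2 * τ) - L / 2 with hc
  have hcpos : 0 < c := by
    have h1 : τ * L < 1 := by
      have := (lt_div_iff₀ hL).mp hτ
      linarith
    have h2 : L / 2 < 1 / (2 * τ) := by
      rw [div_lt_div_iff₀ (by norm_num : (0:ℝ) < 2) (by linarith : (0:ℝ) < 2 * τ)]
      nlinarith
    rw [hc]; linarith
  -- per-step decrease
  have hstep : ∀ n : ℕ, f (x (n + 1)) + g (x (n + 1)) + c * ‖x (n + 1) - x n‖ ^ 2
      ≤ f (x n) + g (x n) := by
    intro n
    have h1 := hiter n (x n)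
    rw [sub_self, norm_zero, hdiag] at h1
    simp only [inner_zero_left] at h1
    have h2 : g (x (n + 1)) ≤ g (x n) + ⟪x (n + 1) - x n, gradient g (x n)⟫ +
        L / 2 * ‖x (n + 1) - x n‖ ^ 2 :=
      my_descent g L hL.le hg hlip (x n) (x (n + 1))
    have h3 := hmaj (x (n + 1)) (x n)
    rw [hc]
    linarith
  have hsum : ∀ N : ℕ, c * ∑ n ∈ Finset.range N, ‖x (n + 1) - x n‖ ^ 2
      ≤ (f (x 0) + g (x 0)) - (f (x N) + g (x N)) := by
    intro N
    have htel : ∑ n ∈ Finset.range N, ((f (x n) + g (x n)) - (f (x (n + 1)) + g (x (n + 1))))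
        = (f (x 0) + g (x 0)) - (f (x N) + g (x N)) :=
      Finset.sum_range_sub' (fun n => f (x n) + g (x n)) N
    rw [← htel, Finset.mul_sum]
    apply Finset.sum_le_sum
    intro n _
    have := hstep n
    linarith
  intro N _
  rw [le_div_iff₀ hcpos]
  have := hsum N
  have := hbound (x N)
  linarith
end

section
/- Let A be an m × n real matrix with A_{ij} ≥ 0 for all i, j, and let y ∈ ℝ^m with y_i ≥ 0 for all i. Let x, x̃ ∈ ℝ^n satisfy x_j > 0 and x̃_j > 0 for all j, and suppose (Ax)_i > 0 and (Ax̃)_i > 0 for all i. Set α̃_{ij} = A_{ij} x̃_j / (Ax̃)_i. Then the EM surrogate majorizes the Poisson negative log-likelihood: f(x) ≤ F_EM(x, x̃), where f(x) = Σ_{i=1}^m [(Ax)_i − y_i · log((Ax)_i)] and F_EM(x, x̃) = Σ_{i=1}^m [(Ax)_i − Σ_{j=1}^n y_i · α̃_{ij} · log(A_{ij} x_j / α̃_{ij})]. -/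
open scoped BigOperators

/-- The Poisson negative log-likelihood `f x = Σ_i [(Ax)_i − y_i log (Ax)_i]`
(with the convention `log 0 = 0`). -/
noncomputable def poissonNLL {m n : ℕ} (A : Matrix (Fin m) (Fin n) ℝ)
    (y : Fin m → ℝ) (x : Fin n → ℝ) : ℝ :=
  ∑ i, (A.mulVec x i - y i * Real.log (A.mulVec x i))

/-- The EM surrogate
`F_EM (x, xt) = Σ_i [(Ax)_i − Σ_j y_i α̃_ij log (A_ij x_j / α̃_ij)]` with
`α̃_ij = A_ij xt_j / (A xt)_i` (conventions `log 0 = 0`, division by zero is zero). -/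
noncomputable def emSurrogate {m n : ℕ} (A : Matrix (Fin m) (Fin n) ℝ)
    (y : Fin m → ℝ) (x xt : Fin n → ℝ) : ℝ :=
  ∑ i, (A.mulVec x i -
    ∑ j, y i * (A i j * xt j / A.mulVec xt i) *
      Real.log (A i j * x j / (A i j * xt j / A.mulVec xt i)))

/-- The EM surrogate majorizes the Poisson negative log-likelihood:
`f x ≤ F_EM (x, xt)`. -/
theorem poissonNLL_le_emSurrogate {m n : ℕ} (A : Matrix (Fin m) (Fin n) ℝ)
    (y : Fin m → ℝ) (hA : ∀ i j, 0 ≤ A i j) (hy : ∀ i, 0 ≤ y i)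
    (x xt : Fin n → ℝ) (hx : ∀ j, 0 < x j) (hxt : ∀ j, 0 < xt j)
    (hAx : ∀ i, 0 < A.mulVec x i) (hAxt : ∀ i, 0 < A.mulVec xt i) :
    poissonNLL A y x ≤ emSurrogate A y x xt := by
  unfold poissonNLL emSurrogate
  apply Finset.sum_le_sum
  intro i _
  have hkey : ∑ j, (A i j * xt j / A.mulVec xt i) *
      Real.log (A i j * x j / (A i j * xt j / A.mulVec xt i)) ≤
      Real.log (A.mulVec x i) := by
    set St := A.mulVec xt i with hSt
    set S := A.mulVec x i with hS
    have hStpos : 0 < St := hAxt i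
    have hSpos : 0 < S := hAx i
    set α : Fin n → ℝ := fun j => A i j * xt j / St with hα
    have hSt_sum : St = ∑ j, A i j * xt j := by
      simp [hSt, Matrix.mulVec, dotProduct]
    have hS_sum : S = ∑ j, A i j * x j := by
      simp [hS, Matrix.mulVec, dotProduct]
    have hα1 : ∑ j, α j = 1 := by
      rw [hα]
      rw [← Finset.sum_div, ← hSt_sum, div_self hStpos.ne']
    have hpt : ∀ j, α j * Real.log (A i j * x j / α j) - α j * Real.log S ≤
        A i j * x j / S - α j := by
      intro j
      rcases eq_or_lt_of_le (hA i j) with h0 | hpos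
      · simp [hα, ← h0]
      · have hαpos : 0 < α j := div_pos (mul_pos hpos (hxt j)) hStpos
        have htpos : 0 < A i j * x j / α j := div_pos (mul_pos hpos (hx j)) hαpos
        have hlog : Real.log ((A i j * x j / α j) / S) ≤ (A i j * x j / α j) / S - 1 :=
          Real.log_le_sub_one_of_pos (div_pos htpos hSpos)
        have hlogd : Real.log ((A i j * x j / α j) / S) =
            Real.log (A i j * x j / α j) - Real.log S :=
          Real.log_div htpos.ne' hSpos.ne'
        rw [hlogd] at hlog
        have := mul_le_mul_of_nonneg_left hlog hαpos.le
        calc α j * Real.log (A i j * x j / α j) - α j * Real.log S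
            = α j * (Real.log (A i j * x j / α j) - Real.log S) := by ring
          _ ≤ α j * ((A i j * x j / α j) / S - 1) := this
          _ = A i j * x j / S - α j := by
              field_simp
    have hsum := Finset.sum_le_sum (fun j (_ : j ∈ Finset.univ) => hpt j)
    have hL : ∑ j, (α j * Real.log (A i j * x j / α j) - α j * Real.log S)
        = (∑ j, α j * Real.log (A i j * x j / α j)) - Real.log S := by
      rw [Finset.sum_sub_distrib, ← Finset.sum_mul, hα1, one_mul]
    have hRHS : ∑ j, (A i j * x j / S - α j) = 0 := by
      rw [Finset.sum_sub_distrib, ← Finset.sum_div, ← hS_sum, div_self hSpos.ne', hα1]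
      ring
    rw [hL, hRHS] at hsum
    have hfin : ∑ j, α j * Real.log (A i j * x j / α j) ≤ Real.log S := by linarith
    exact hfin
  have hy' := hy i
  have : ∑ j, y i * (A i j * xt j / A.mulVec xt i) *
      Real.log (A i j * x j / (A i j * xt j / A.mulVec xt i)) ≤
      y i * Real.log (A.mulVec x i) := by
    calc ∑ j, y i * (A i j * xt j / A.mulVec xt i) *
          Real.log (A i j * x j / (A i j * xt j / A.mulVec xt i))
        = y i * ∑ j, (A i j * xt j / A.mulVec xt i) *
          Real.log (A i j * x j / (A i j * xt j / A.mulVec xt i)) := by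
          rw [Finset.mul_sum]; congr 1; ext j; ring
      _ ≤ y i * Real.log (A.mulVec x i) := mul_le_mul_of_nonneg_left hkey hy'
  linarith
end

section
/- Let A be an m × n real matrix with A_{ij} ≥ 0 for all i, j, let y ∈ ℝ^m with y_i ≥ 0 for all i, and let x̃ ∈ ℝ^n with x̃_j > 0 for all j and (Ax̃)_i > 0 for all i. Define the sensitivity s_j = Σ_{i=1}^m A_{ij} and assume s_j > 0 for all j; set α̃_{ij} = A_{ij} x̃_j / (Ax̃)_i and assume that for each j there exists i with y_i A_{ij} > 0. Define the multiplicative (Richardson–Lucy/MLEM) update x* by x*_j = (x̃_j / s_j) · Σ_{i=1}^m y_i A_{ij} / (Ax̃)_i. Then x*_j > 0 for all j, and x* is a global minimizer of x ↦ F_EM(x, x̃) over the open positive orthant: for every x ∈ ℝ^n with x_j > 0 for all j, F_EM(x*, x̃) ≤ F_EM(x, x̃), where F_EM(x, x̃) = Σ_{i=1}^m [(Ax)_i − Σ_{j=1}^n y_i · α̃_{ij} · log(A_{ij} x_j / α̃_{ij})]. -/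
open scoped BigOperators

lemma scalar_min_aux (s b x : ℝ) (hs : 0 < s) (hb : 0 < b) (hx : 0 < x) :
    s * (b / s) - b * Real.log (b / s) ≤ s * x - b * Real.log x := by
  have hu : 0 < s * x / b := by positivity
  have h1 : Real.log (s * x / b) ≤ s * x / b - 1 := Real.log_le_sub_one_of_pos hu
  have h2 : Real.log (s * x / b) = Real.log x - Real.log (b / s) := by
    rw [Real.log_div (by positivity) hb.ne', Real.log_mul hs.ne' hx.ne',
        Real.log_div hb.ne' hs.ne']
    ring
  have h3 : s * (b / s) = b := by field_simp
  have h4 : b * Real.log (s * x / b) ≤ s * x - b := by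
    calc b * Real.log (s * x / b) ≤ b * (s * x / b - 1) :=
          mul_le_mul_of_nonneg_left h1 hb.le
      _ = s * x - b := by field_simp
  rw [h3]
  rw [h2] at h4
  nlinarith [h4]

lemma emSurrogate_eq {m n : ℕ} (A : Matrix (Fin m) (Fin n) ℝ)
    (y : Fin m → ℝ) (hA : ∀ i j, 0 ≤ A i j)
    (xt : Fin n → ℝ) (hxt : ∀ j, 0 < xt j) (hAxt : ∀ i, 0 < A.mulVec xt i)
    (x : Fin n → ℝ) (hx : ∀ j, 0 < x j) :
    emSurrogate A y x xt =
      (∑ j, ((∑ i, A i j) * x j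
        - (∑ i, y i * (A i j * xt j / A.mulVec xt i)) * Real.log (x j)))
      - ∑ i, ∑ j, y i * (A i j * xt j / A.mulVec xt i) *
          Real.log (A i j / (A i j * xt j / A.mulVec xt i)) := by
  have key : ∀ i j, y i * (A i j * xt j / A.mulVec xt i) *
      Real.log (A i j * x j / (A i j * xt j / A.mulVec xt i)) =
      y i * (A i j * xt j / A.mulVec xt i) * Real.log (x j) +
      y i * (A i j * xt j / A.mulVec xt i) *
        Real.log (A i j / (A i j * xt j / A.mulVec xt i)) := by
    intro i j
    rcases eq_or_lt_of_le (hA i j) with h0 | hpos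
    · rw [← h0]; simp
    · have hαpos : 0 < A i j * xt j / A.mulVec xt i :=
        div_pos (mul_pos hpos (hxt j)) (hAxt i)
      have hsplit : A i j * x j / (A i j * xt j / A.mulVec xt i)
          = (A i j / (A i j * xt j / A.mulVec xt i)) * x j := by ring
      rw [hsplit, Real.log_mul (div_ne_zero hpos.ne' hαpos.ne') (hx j).ne']
      ring
  have e1 : ∑ i, A.mulVec x i = ∑ j, (∑ i, A i j) * x j := by
    simp only [Matrix.mulVec, dotProduct]
    rw [Finset.sum_comm]
    exact Finset.sum_congr rfl fun j _ => (Finset.sum_mul _ _ _).symm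
  have e2 : ∑ i, ∑ j, y i * (A i j * xt j / A.mulVec xt i) * Real.log (x j)
      = ∑ j, (∑ i, y i * (A i j * xt j / A.mulVec xt i)) * Real.log (x j) := by
    rw [Finset.sum_comm]
    exact Finset.sum_congr rfl fun j _ => (Finset.sum_mul _ _ _).symm
  unfold emSurrogate
  simp only [key]
  rw [Finset.sum_sub_distrib, e1]
  simp only [Finset.sum_add_distrib]
  rw [e2, Finset.sum_sub_distrib]
  ring

/-- The multiplicative Richardson–Lucy/MLEM update
`x*_j = (xt_j / s_j) Σ_i y_i A_ij / (A xt)_i` has strictly positive entries and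
globally minimizes `x ↦ F_EM (x, xt)` over the open positive orthant. -/
theorem mlem_update_minimizes_emSurrogate {m n : ℕ} (A : Matrix (Fin m) (Fin n) ℝ)
    (y : Fin m → ℝ) (hA : ∀ i j, 0 ≤ A i j) (hy : ∀ i, 0 ≤ y i)
    (xt : Fin n → ℝ) (hxt : ∀ j, 0 < xt j) (hAxt : ∀ i, 0 < A.mulVec xt i)
    (hs : ∀ j, 0 < ∑ i, A i j)
    (hyA : ∀ j, ∃ i, 0 < y i * A i j)
    (xstar : Fin n → ℝ)
    (hxstar : ∀ j, xstar j = xt j / (∑ i, A i j) * ∑ i, y i * A i j / A.mulVec xt i) :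
    (∀ j, 0 < xstar j) ∧
    (∀ x : Fin n → ℝ, (∀ j, 0 < x j) →
      emSurrogate A y xstar xt ≤ emSurrogate A y x xt) := by
  have hb : ∀ j, 0 < ∑ i, y i * (A i j * xt j / A.mulVec xt i) := by
    intro j
    obtain ⟨i, hi⟩ := hyA j
    refine Finset.sum_pos' (fun k _ => ?_) ⟨i, Finset.mem_univ i, ?_⟩
    · exact mul_nonneg (hy k)
        (div_nonneg (mul_nonneg (hA k j) (hxt j).le) (hAxt k).le)
    · have h : y i * (A i j * xt j / A.mulVec xt i)
          = (y i * A i j) * (xt j / A.mulVec xt i) := by ring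
      rw [h]
      exact mul_pos hi (div_pos (hxt j) (hAxt i))
  have hx' : ∀ j, xstar j
      = (∑ i, y i * (A i j * xt j / A.mulVec xt i)) / (∑ i, A i j) := by
    intro j
    rw [hxstar j]
    have h : (∑ i, y i * (A i j * xt j / A.mulVec xt i))
        = xt j * ∑ i, y i * A i j / A.mulVec xt i := by
      rw [Finset.mul_sum]
      exact Finset.sum_congr rfl fun i _ => by ring
    rw [h]
    ring
  have hxs : ∀ j, 0 < xstar j := fun j => by
    rw [hx' j]; exact div_pos (hb j) (hs j)
  refine ⟨hxs, fun x hx => ?_⟩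
  rw [emSurrogate_eq A y hA xt hxt hAxt x hx,
      emSurrogate_eq A y hA xt hxt hAxt xstar hxs]
  apply sub_le_sub_right
  apply Finset.sum_le_sum
  intro j _
  rw [hx' j]
  exact scalar_min_aux _ _ _ (hs j) (hb j) (hx j)
end

section
/- Let A be an m × n real matrix with A_{ij} ≥ 0 for all i, j, such that every row of A has a strictly positive entry, let y ∈ ℝ^m with y_i ≥ 0 for all i, and let x̃ ∈ ℝ^n with x̃_j > 0 for all j and (Ax̃)_i > 0 for all i. Define s_j = Σ_{i=1}^m A_{ij}, assume s_j > 0 for all j, and assume that for each j there exists i with y_i A_{ij} > 0. Define the Richardson–Lucy/MLEM update x* by x*_j = (x̃_j / s_j) · Σ_{i=1}^m y_i A_{ij} / (Ax̃)_i. Then the Poisson negative log-likelihood does not increase: f(x*) ≤ f(x̃), where f(x) = Σ_{i=1}^m [(Ax)_i − y_i · log((Ax)_i)]. -/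
open scoped BigOperators

/-- The Richardson–Lucy/MLEM multiplicative update
`x*_j = (xt_j / s_j) Σ_i y_i A_ij / (A xt)_i` does not increase the Poisson
negative log-likelihood: `f x* ≤ f xt`. -/
theorem mlem_update_decreases_poissonNLL {m n : ℕ} (A : Matrix (Fin m) (Fin n) ℝ)
    (y : Fin m → ℝ) (hA : ∀ i j, 0 ≤ A i j)
    (hrow : ∀ i, ∃ j, 0 < A i j) (hy : ∀ i, 0 ≤ y i)
    (xt : Fin n → ℝ) (hxt : ∀ j, 0 < xt j) (hAxt : ∀ i, 0 < A.mulVec xt i)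
    (hs : ∀ j, 0 < ∑ i, A i j)
    (hyA : ∀ j, ∃ i, 0 < y i * A i j)
    (xstar : Fin n → ℝ)
    (hxstar : ∀ j, xstar j = xt j / (∑ i, A i j) * ∑ i, y i * A i j / A.mulVec xt i) :
    poissonNLL A y xstar ≤ poissonNLL A y xt := by
  classical
  set s : Fin n → ℝ := fun j => ∑ i, A i j with hsdef
  have hxs : ∀ j, 0 < xstar j := by
    intro j
    rw [hxstar]
    refine mul_pos (div_pos (hxt j) (hs j)) ?_
    obtain ⟨i, hi⟩ := hyA j
    exact Finset.sum_pos'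
      (fun i _ => div_nonneg (mul_nonneg (hy i) (hA i j)) (hAxt i).le)
      ⟨i, Finset.mem_univ i, div_pos hi (hAxt i)⟩
  have hAxs : ∀ i, 0 < A.mulVec xstar i := by
    intro i
    obtain ⟨j, hj⟩ := hrow i
    have : A.mulVec xstar i = ∑ j, A i j * xstar j := by
      simp [Matrix.mulVec, dotProduct]
    rw [this]
    exact Finset.sum_pos'
      (fun j _ => mul_nonneg (hA i j) (hxs j).le)
      ⟨j, Finset.mem_univ j, mul_pos hj (hxs j)⟩
  have hs' : ∀ j, 0 < s j := hs
  set c : Fin m → Fin n → ℝ := fun i j => A i j * xt j / A.mulVec xt i with hcdef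
  have hc0 : ∀ i j, 0 ≤ c i j := fun i j =>
    div_nonneg (mul_nonneg (hA i j) (hxt j).le) (hAxt i).le
  have hcsum : ∀ i, ∑ j, c i j = 1 := by
    intro i
    have h : ∑ j, A i j * xt j = A.mulVec xt i := by
      simp [Matrix.mulVec, dotProduct]
    rw [hcdef]
    simp only [← Finset.sum_div, h, div_self (hAxt i).ne']
  have hcw : ∀ i, ∑ j, c i j * (xstar j / xt j) = A.mulVec xstar i / A.mulVec xt i := by
    intro i
    have h : ∀ j, c i j * (xstar j / xt j) = A i j * xstar j / A.mulVec xt i := by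
      intro j
      rw [hcdef]
      field_simp [(hxt j).ne', (hAxt i).ne']
    rw [Finset.sum_congr rfl fun j _ => h j, ← Finset.sum_div]
    have h2 : ∑ j, A i j * xstar j = A.mulVec xstar i := by
      simp [Matrix.mulVec, dotProduct]
    rw [h2]
  have jensen : ∀ i, ∑ j, c i j * Real.log (xstar j / xt j) ≤
      Real.log (A.mulVec xstar i / A.mulVec xt i) := by
    intro i
    have hconc : ConcaveOn ℝ (Set.Ioi 0) Real.log := strictConcaveOn_log_Ioi.concaveOn
    have h := hconc.le_map_sum
      (t := Finset.univ) (w := c i) (p := fun j => xstar j / xt j)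
      (fun j _ => hc0 i j) (hcsum i)
      (fun j _ => Set.mem_Ioi.mpr (div_pos (hxs j) (hxt j)))
    simp only [smul_eq_mul] at h
    calc ∑ j, c i j * Real.log (xstar j / xt j)
        ≤ Real.log (∑ j, c i j * (xstar j / xt j)) := h
      _ = Real.log (A.mulVec xstar i / A.mulVec xt i) := by rw [hcw i]
  have hyc : ∀ j, ∑ i, y i * c i j = s j * xstar j := by
    intro j
    have h1 : ∀ i, y i * c i j = xt j * (y i * A i j / A.mulVec xt i) := by
      intro i
      rw [hcdef]
      field_simp [(hAxt i).ne']
    rw [Finset.sum_congr rfl fun i _ => h1 i, ← Finset.mul_sum, hxstar j]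
    have : (∑ i, A i j) = s j := rfl
    rw [this]
    field_simp [(hs' j).ne']
  have perj : ∀ j, 0 ≤ s j * (xt j - xstar j) + s j * xstar j * Real.log (xstar j / xt j) := by
    intro j
    have hlog := Real.log_le_sub_one_of_pos (div_pos (hxt j) (hxs j))
    have hinv : Real.log (xt j / xstar j) = - Real.log (xstar j / xt j) := by
      rw [← Real.log_inv, inv_div]
    rw [hinv] at hlog
    have h2 : xt j / xstar j - 1 = (xt j - xstar j) / xstar j := by
      field_simp [(hxs j).ne']
    rw [h2] at hlog
    have h3 := mul_le_mul_of_nonneg_left hlog (mul_nonneg (hs j).le (hxs j).le)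
    have h4 : s j * xstar j * ((xt j - xstar j) / xstar j) = s j * (xt j - xstar j) := by
      field_simp [(hxs j).ne']
    rw [h4, mul_neg] at h3
    linarith
  have step1 : ∑ i, y i * ∑ j, c i j * Real.log (xstar j / xt j) ≤
      ∑ i, y i * (Real.log (A.mulVec xstar i) - Real.log (A.mulVec xt i)) := by
    refine Finset.sum_le_sum fun i _ => ?_
    have h := jensen i
    rw [Real.log_div (hAxs i).ne' (hAxt i).ne'] at h
    exact mul_le_mul_of_nonneg_left h (hy i)
  have swap1 : ∑ i, (A.mulVec xt i - A.mulVec xstar i) = ∑ j, s j * (xt j - xstar j) := by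
    simp only [Matrix.mulVec, dotProduct, ← Finset.sum_sub_distrib, ← mul_sub]
    rw [Finset.sum_comm]
    refine Finset.sum_congr rfl fun j _ => ?_
    rw [hsdef, Finset.sum_mul]
  have swap2 : ∑ i, y i * ∑ j, c i j * Real.log (xstar j / xt j) =
      ∑ j, s j * xstar j * Real.log (xstar j / xt j) := by
    simp only [Finset.mul_sum, ← mul_assoc]
    rw [Finset.sum_comm]
    refine Finset.sum_congr rfl fun j _ => ?_
    rw [← Finset.sum_mul, hyc j]
  have final : (0:ℝ) ≤ ∑ j, s j * (xt j - xstar j) +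
      ∑ j, s j * xstar j * Real.log (xstar j / xt j) := by
    rw [← Finset.sum_add_distrib]
    exact Finset.sum_nonneg fun j _ => perj j
  have expand : poissonNLL A y xt - poissonNLL A y xstar =
      ∑ i, (A.mulVec xt i - A.mulVec xstar i) +
      ∑ i, y i * (Real.log (A.mulVec xstar i) - Real.log (A.mulVec xt i)) := by
    rw [poissonNLL, poissonNLL, ← Finset.sum_sub_distrib, ← Finset.sum_add_distrib]
    refine Finset.sum_congr rfl fun i _ => ?_
    ring
  linarith [expand, step1, swap1, swap2, final]
end
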